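/- arXiv:2605.30991 — 2 statements merged into one kernel-verified Lean document; each statement's English description precedes it below -/
import Mathlib

section
/- Let (X, 𝒜, μ) be a probability space, f : X → ℝ measurable with exp∘f integrable with respect to μ, and B ∈ 𝒜 with μ(B) = ε ∈ (0, 1). Suppose there exist a ∈ ℝ and δ > 0 such that f ≥ a on B and f ≤ a − δ on Bᶜ. Let π be the probability measure with dπ/dμ = exp(f)/Z, Z = ∫ exp(f) dμ. Then the mass the tilted measure assigns to B satisfies π(B) ≥ ε / (ε + (1 − ε) e^{−δ}) = 1 / (1 + ((1 − ε)/ε) e^{−δ}). -/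
open MeasureTheory Real

/-- **Supporting lemma for Proposition 1.**
If `μ B = ε ∈ (0,1)`, `f ≥ a` on `B`, and `f ≤ a - δ` on `Bᶜ`, then the exponentially
tilted measure `ν` with `dν/dμ = exp(f)/Z` satisfies
`ν(B) ≥ ε / (ε + (1 - ε) e^{-δ})`. -/
theorem tilted_measure_mass_lower_bound
    {X : Type*} [MeasurableSpace X] (μ : Measure X) [IsProbabilityMeasure μ]
    (f : X → ℝ) (hf : Measurable f)
    (hint : Integrable (fun x => Real.exp (f x)) μ)
    (B : Set X) (hB : MeasurableSet B)
    (ε : ℝ) (hε0 : 0 < ε) (hε1 : ε < 1) (hμB : μ B = ENNReal.ofReal ε)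
    (a δ : ℝ) (hδ : 0 < δ)
    (hfB : ∀ x ∈ B, a ≤ f x) (hfBc : ∀ x ∉ B, f x ≤ a - δ)
    (Z : ℝ) (hZ : Z = ∫ x, Real.exp (f x) ∂μ)
    (ν : Measure X)
    (hν : ν = μ.withDensity (fun x => ENNReal.ofReal (Real.exp (f x) / Z))) :
    ENNReal.ofReal (ε / (ε + (1 - ε) * Real.exp (-δ))) ≤ ν B := by
  have hZpos : 0 < Z := hZ ▸ integral_exp_pos hint
  set IB : ℝ := ∫ x in B, Real.exp (f x) ∂μ with hIBdef
  set IBc : ℝ := ∫ x in Bᶜ, Real.exp (f x) ∂μ with hIBcdef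
  have hμBreal : (μ B).toReal = ε := by
    rw [hμB, ENNReal.toReal_ofReal hε0.le]
  have hμBc : (μ Bᶜ).toReal = 1 - ε := by
    rw [measure_compl hB (measure_ne_top μ B), hμB]
    rw [ENNReal.toReal_sub_of_le (by
      rw [measure_univ]
      exact ENNReal.ofReal_le_one.mpr hε1.le) (by simp)]
    simp [ENNReal.toReal_ofReal hε0.le]
  -- lower bound on IB
  have hIB : Real.exp a * ε ≤ IB := by
    have := setIntegral_ge_of_const_le (c := Real.exp a) hB (measure_ne_top μ B)
      (fun x hx => exp_le_exp.mpr (hfB x hx)) hint.integrableOn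
    rwa [measureReal_def, hμBreal, smul_eq_mul, mul_comm] at this
  -- upper bound on IBc
  have hIBc : IBc ≤ Real.exp (a - δ) * (1 - ε) := by
    have : IBc ≤ ∫ _ in Bᶜ, Real.exp (a - δ) ∂μ := by
      apply setIntegral_mono_on hint.integrableOn (integrableOn_const
        (measure_ne_top μ Bᶜ) enorm_ne_top) hB.compl
      intro x hx
      exact exp_le_exp.mpr (hfBc x hx)
    rwa [setIntegral_const, measureReal_def, hμBc, smul_eq_mul, mul_comm] at this
  have hIBcnn : 0 ≤ IBc := setIntegral_nonneg hB.compl (fun x _ => (exp_pos _).le)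
  have hIBpos : 0 < IB := lt_of_lt_of_le (by positivity) hIB
  have hZsplit : Z = IB + IBc := by
    rw [hZ, ← integral_add_compl hB hint]
  -- compute ν B
  have hνB : ν B = ENNReal.ofReal (IB / Z) := by
    rw [hν, withDensity_apply _ hB]
    rw [← ofReal_integral_eq_lintegral_ofReal
      ((hint.div_const Z).integrableOn)
      (Filter.Eventually.of_forall fun x => by positivity)]
    rw [integral_div]
  rw [hνB]
  apply ENNReal.ofReal_le_ofReal
  have h1ε : (0:ℝ) < 1 - ε := by linarith
  have hden : 0 < ε + (1 - ε) * Real.exp (-δ) :=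
    add_pos hε0 (mul_pos h1ε (Real.exp_pos _))
  rw [div_le_div_iff₀ hden hZpos, hZsplit]
  have key : ε * IBc ≤ IB * ((1 - ε) * Real.exp (-δ)) := by
    have h1 : ε * IBc ≤ ε * (Real.exp (a - δ) * (1 - ε)) :=
      mul_le_mul_of_nonneg_left hIBc hε0.le
    have h2 : Real.exp (a - δ) = Real.exp a * Real.exp (-δ) := by
      rw [← Real.exp_add]; ring_nf
    have h3 : (Real.exp a * ε) * ((1 - ε) * Real.exp (-δ)) ≤
        IB * ((1 - ε) * Real.exp (-δ)) :=
      mul_le_mul_of_nonneg_right hIB (mul_pos h1ε (Real.exp_pos _)).le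
    rw [h2] at h1
    have h4 : ε * (Real.exp a * Real.exp (-δ) * (1 - ε))
        = (Real.exp a * ε) * ((1 - ε) * Real.exp (-δ)) := by ring
    linarith
  nlinarith [key]
end

section
/- Let (X, 𝒜, μ) be a probability space, f : X → ℝ measurable with exp∘f integrable with respect to μ, and B ∈ 𝒜 with μ(B) = ε ∈ (0, 1). Suppose there exist a ∈ ℝ and δ > 0 such that f ≥ a on B, f ≤ a − δ on Bᶜ, and δ ≥ log(1/ε) + C for some C > 0. Let π be the probability measure with dπ/dμ = exp(f)/Z, Z = ∫ exp(f) dμ. Then π(B) ≥ 1 / (1 + e^{−C}); in particular π(B) > 1/2. -/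
open MeasureTheory Real

/-- **Supporting lemma for Proposition 1.**
Under the complex-reward gap condition `δ ≥ log(1/ε) + C` with `C > 0`, the exponentially
tilted measure `ν` with `dν/dμ = exp(f)/Z` concentrates mass on the rare set `B`:
`ν(B) ≥ 1/(1 + e^{-C})`, and in particular `ν(B) > 1/2`. -/
theorem tilted_measure_concentration
    {X : Type*} [MeasurableSpace X] (μ : Measure X) [IsProbabilityMeasure μ]
    (f : X → ℝ) (hf : Measurable f)
    (hint : Integrable (fun x => Real.exp (f x)) μ)
    (B : Set X) (hB : MeasurableSet B)
    (ε : ℝ) (hε0 : 0 < ε) (hε1 : ε < 1) (hμB : μ B = ENNReal.ofReal ε)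
    (a δ : ℝ) (hδ : 0 < δ)
    (hfB : ∀ x ∈ B, a ≤ f x) (hfBc : ∀ x ∉ B, f x ≤ a - δ)
    (C : ℝ) (hC : 0 < C) (hδC : Real.log (1 / ε) + C ≤ δ)
    (Z : ℝ) (hZ : Z = ∫ x, Real.exp (f x) ∂μ)
    (ν : Measure X)
    (hν : ν = μ.withDensity (fun x => ENNReal.ofReal (Real.exp (f x) / Z))) :
    ENNReal.ofReal (1 / (1 + Real.exp (-C))) ≤ ν B ∧ ENNReal.ofReal (1 / 2) < ν B := by
  have hintB : Integrable (fun x => Real.exp (f x)) (μ.restrict B) := hint.restrict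
  have hintBc : Integrable (fun x => Real.exp (f x)) (μ.restrict Bᶜ) := hint.restrict
  set IB : ℝ := ∫ x in B, Real.exp (f x) ∂μ with hIB
  set IBc : ℝ := ∫ x in Bᶜ, Real.exp (f x) ∂μ with hIBc
  have hμBc : (μ Bᶜ).toReal ≤ 1 := by
    have := measure_mono (Set.subset_univ Bᶜ) (μ := μ)
    simp only [measure_univ] at this
    exact ENNReal.toReal_le_of_le_ofReal zero_le_one (by simpa using this)
  have hμBr : (μ B).toReal = ε := by rw [hμB, ENNReal.toReal_ofReal hε0.le]
  -- lower bound on IB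
  have hIBlb : ε * Real.exp a ≤ IB := by
    have : ∫ x in B, Real.exp a ∂μ ≤ IB := by
      apply setIntegral_mono_on (integrable_const _) hintB hB
      intro x hx
      exact Real.exp_le_exp.2 (hfB x hx)
    rwa [setIntegral_const, smul_eq_mul, Measure.real, hμBr] at this
  have hIBpos : 0 < IB := lt_of_lt_of_le (by positivity) hIBlb
  -- upper bound on IBc
  have hIBcub : IBc ≤ Real.exp (a - δ) := by
    have h1 : IBc ≤ ∫ x in Bᶜ, Real.exp (a - δ) ∂μ := by
      apply setIntegral_mono_on hintBc (integrable_const _) hB.compl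
      intro x hx
      exact Real.exp_le_exp.2 (hfBc x hx)
    rw [setIntegral_const, smul_eq_mul] at h1
    calc IBc ≤ (μ Bᶜ).toReal * Real.exp (a - δ) := h1
      _ ≤ 1 * Real.exp (a - δ) := by
          apply mul_le_mul_of_nonneg_right hμBc (Real.exp_nonneg _)
      _ = Real.exp (a - δ) := one_mul _
  have hIBcnn : 0 ≤ IBc := setIntegral_nonneg hB.compl (fun x _ => (Real.exp_pos _).le)
  -- Z = IB + IBc
  have hZsum : Z = IB + IBc := by
    rw [hZ, ← integral_add_compl hB hint]
  have hZpos : 0 < Z := by rw [hZsum]; linarith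
  -- key: e^{a-δ} ≤ e^{-C} * IB
  have hkey : Real.exp (a - δ) ≤ Real.exp (-C) * IB := by
    have h1 : Real.exp (-δ) ≤ ε * Real.exp (-C) := by
      have : -δ ≤ Real.log ε - C := by
        rw [Real.log_div one_ne_zero (ne_of_gt hε0), Real.log_one] at hδC
        linarith
      calc Real.exp (-δ) ≤ Real.exp (Real.log ε - C) := Real.exp_le_exp.2 this
        _ = ε * Real.exp (-C) := by rw [Real.exp_sub, Real.exp_log hε0, Real.exp_neg]; ring
    calc Real.exp (a - δ) = Real.exp (-δ) * Real.exp a := by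
          rw [← Real.exp_add]; ring_nf
      _ ≤ (ε * Real.exp (-C)) * Real.exp a :=
          mul_le_mul_of_nonneg_right h1 (Real.exp_nonneg _)
      _ = Real.exp (-C) * (ε * Real.exp a) := by ring
      _ ≤ Real.exp (-C) * IB := mul_le_mul_of_nonneg_left hIBlb (Real.exp_nonneg _)
  have hIBcIB : IBc ≤ Real.exp (-C) * IB := le_trans hIBcub hkey
  -- compute ν B
  have hνB : ν B = ENNReal.ofReal (IB / Z) := by
    rw [hν, withDensity_apply _ hB]
    rw [← ofReal_integral_eq_lintegral_ofReal]
    · rw [integral_div]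
    · exact hintB.div_const Z
    · exact Filter.Eventually.of_forall (fun x => by positivity)
  -- main real inequality
  have hmain : 1 / (1 + Real.exp (-C)) ≤ IB / Z := by
    rw [div_le_div_iff₀ (by positivity) hZpos, hZsum]
    nlinarith [Real.exp_pos (-C)]
  have h2 : (1 : ℝ) / 2 < 1 / (1 + Real.exp (-C)) := by
    have hCe : Real.exp (-C) < 1 := Real.exp_lt_one_iff.2 (by linarith)
    apply div_lt_div_of_pos_left one_pos (by positivity)
    linarith
  constructor
  · rw [hνB]; exact ENNReal.ofReal_le_ofReal hmain
  · rw [hνB]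
    exact lt_of_lt_of_le (ENNReal.ofReal_lt_ofReal_iff (by positivity) |>.2 (lt_of_lt_of_le h2 hmain)) le_rfl
end
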